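/- Let λ ∈ ℂ with |λ| > 1. Then for every A ∈ ℂ^{2n×2n} there exists exactly one matrix D ∈ ℂ^{2n×2n} whose nonzero entries are confined to the positions (i,1) with n+1 ≤ i ≤ 2n (the first column of the lower-left n×n block) such that A − D ∈ T(H_n(λ)); that is, ℂ^{2n×2n} = T(H_n(λ)) ⊕_ℝ V, where V is the complex subspace of matrices supported on these n positions. -/

import Mathlib

open Matrix

/-- The `n×n` upper-triangular Jordan block with eigenvalue `l`. -/
noncomputable def Jmat (n : ℕ) (l : ℂ) : Matrix (Fin n) (Fin n) ℂ :=
  Matrix.of fun i j =>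
    if (i : ℕ) = (j : ℕ) then l
    else if (j : ℕ) = (i : ℕ) + 1 then 1 else 0

/-- The symmetric matrix `Δ_n`: (1-based) entry `(j,k)` is `1` if `j+k = n+1`,
`i` if `j+k = n+2`, and `0` otherwise. -/
noncomputable def Dmat (n : ℕ) : Matrix (Fin n) (Fin n) ℂ :=
  Matrix.of fun i j =>
    if (i : ℕ) + (j : ℕ) + 1 = n then 1
    else if (i : ℕ) + (j : ℕ) = n then Complex.I
    else 0

/-- The `2m×2m` block matrix `H_m(l) = [[0, I],[J_m(l), 0]]`. -/
noncomputable def Hmat (m : ℕ) (l : ℂ) : Matrix (Fin m ⊕ Fin m) (Fin m ⊕ Fin m) ℂ :=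
  Matrix.fromBlocks 0 1 (Jmat m l) 0

/-- `T(A) = {CᴴA + AC}`, the tangent space to the *congruence class of `A`. -/
def Tset {n : Type*} [Fintype n] (A : Matrix n n ℂ) : Set (Matrix n n ℂ) :=
  {X | ∃ C : Matrix n n ℂ, X = Cᴴ * A + A * C}

/-- `T(M,N) = {(SᴴM + NR, RᴴN + MS)}`. -/
def Tpair {p q : Type*} [Fintype p] [Fintype q]
    (M : Matrix p p ℂ) (N : Matrix q q ℂ) :
    Set (Matrix q p ℂ × Matrix p q ℂ) :=
  {X | ∃ (S : Matrix p q ℂ) (R : Matrix q p ℂ),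
      X = (Sᴴ * M + N * R, Rᴴ * N + M * S)}


/-- Entry of a matrix with ℕ indices, 0 out of range. -/
def ent {n : ℕ} (P : Matrix (Fin n) (Fin n) ℂ) (a b : ℕ) : ℂ :=
  if h : a < n ∧ b < n then P ⟨a, h.1⟩ ⟨b, h.2⟩ else 0

section entlemmas
variable {n : ℕ} {l : ℂ}

lemma ent_apply (P : Matrix (Fin n) (Fin n) ℂ) (i j : Fin n) : ent P i j = P i j := by
  rw [ent, dif_pos ⟨i.isLt, j.isLt⟩]

lemma ent_out (P : Matrix (Fin n) (Fin n) ℂ) {a b : ℕ} (h : n ≤ a ∨ n ≤ b) : ent P a b = 0 := by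
  rw [ent, dif_neg]; omega

lemma ent_row (P : Matrix (Fin n) (Fin n) ℂ) (a : ℕ) (j : Fin n) :
    ent P a j = if h : a < n then P ⟨a, h⟩ j else 0 := by
  unfold ent
  split_ifs with h1 h2 <;> first | rfl | (exfalso; omega)

lemma ent_col (P : Matrix (Fin n) (Fin n) ℂ) (i : Fin n) (b : ℕ) :
    ent P i b = if h : b < n then P i ⟨b, h⟩ else 0 := by
  unfold ent
  split_ifs with h1 h2 <;> first | rfl | (exfalso; omega)

lemma ent_sub (P Q : Matrix (Fin n) (Fin n) ℂ) (a b : ℕ) :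
    ent (P - Q) a b = ent P a b - ent Q a b := by
  unfold ent; split_ifs <;> simp [Matrix.sub_apply]

lemma ent_conjT (P : Matrix (Fin n) (Fin n) ℂ) (a b : ℕ) :
    ent Pᴴ a b = (starRingEnd ℂ) (ent P b a) := by
  unfold ent
  split_ifs with h1 h2 <;> first | rfl | (exact (map_zero (starRingEnd ℂ)).symm) | (exfalso; omega)

lemma ent_ext {P Q : Matrix (Fin n) (Fin n) ℂ} (h : ∀ a b : ℕ, ent P a b = ent Q a b) :
    P = Q := by
  ext i j
  have := h i j
  rwa [ent_apply, ent_apply] at this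

/-- helper sum -/
lemma sum_ite_val {m : ℕ} (f : Fin m → ℂ) (v : ℕ) :
    (∑ k : Fin m, if (k : ℕ) = v then f k else 0) = if h : v < m then f ⟨v, h⟩ else 0 := by
  split_ifs with h
  · rw [Finset.sum_eq_single (⟨v, h⟩ : Fin m)]
    · exact if_pos rfl
    · intro b _ hb
      exact if_neg (fun hc => hb (Fin.ext hc))
    · intro h2; exact absurd (Finset.mem_univ _) h2
  · apply Finset.sum_eq_zero
    intro k _
    rw [if_neg]
    have := k.isLt
    omega

lemma Jmat_mul_apply (P : Matrix (Fin n) (Fin n) ℂ) (i j : Fin n) :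
    (Jmat n l * P) i j = l * P i j + ent P ((i : ℕ) + 1) j := by
  rw [Matrix.mul_apply]
  have key : ∀ k : Fin n, Jmat n l i k * P k j
      = (if (k : ℕ) = (i : ℕ) then l * P k j else 0)
        + (if (k : ℕ) = (i : ℕ) + 1 then P k j else 0) := by
    intro k
    simp only [Jmat, Matrix.of_apply]
    split_ifs <;> first | ring1 | (exfalso; omega)
  rw [Finset.sum_congr rfl (fun k _ => key k), Finset.sum_add_distrib,
    sum_ite_val (fun k => l * P k j) (i : ℕ), sum_ite_val (fun k => P k j) ((i : ℕ) + 1),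
    dif_pos i.isLt, ent_row]

lemma mul_Jmat_apply (P : Matrix (Fin n) (Fin n) ℂ) (i j : Fin n) :
    (P * Jmat n l) i j = l * P i j + (if (j : ℕ) = 0 then 0 else ent P i ((j : ℕ) - 1)) := by
  rw [Matrix.mul_apply]
  have key : ∀ k : Fin n, P i k * Jmat n l k j
      = (if (k : ℕ) = (j : ℕ) then l * P i k else 0)
        + (if (j : ℕ) = 0 then 0 else if (k : ℕ) = (j : ℕ) - 1 then P i k else 0) := by
    intro k
    simp only [Jmat, Matrix.of_apply]
    split_ifs <;> first | ring1 | (exfalso; omega)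
  rw [Finset.sum_congr rfl (fun k _ => key k), Finset.sum_add_distrib,
    sum_ite_val (fun k => l * P i k) (j : ℕ), dif_pos j.isLt]
  congr 1
  split_ifs with h1
  · exact Finset.sum_const_zero
  · rw [sum_ite_val (fun k => P i k) ((j : ℕ) - 1), ent_col]

lemma ent_in (P : Matrix (Fin n) (Fin n) ℂ) {a b : ℕ} (ha : a < n) (hb : b < n) :
    ent P a b = P ⟨a, ha⟩ ⟨b, hb⟩ :=
  dif_pos ⟨ha, hb⟩

lemma Jmul_ent (P : Matrix (Fin n) (Fin n) ℂ) (a b : ℕ) :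
    ent (Jmat n l * P) a b = l * ent P a b + ent P (a + 1) b := by
  by_cases h : a < n ∧ b < n
  · obtain ⟨ha, hb⟩ := h
    rw [ent_in (Jmat n l * P) ha hb, Jmat_mul_apply, ent_in P ha hb]
  · rw [ent_out _ (by omega), ent_out P (a := a) (b := b) (by omega),
      ent_out P (a := a + 1) (b := b) (by omega)]
    ring

lemma mulJ_ent (P : Matrix (Fin n) (Fin n) ℂ) (a b : ℕ) :
    ent (P * Jmat n l) a b
      = l * ent P a b + (if b = 0 ∨ n ≤ b then 0 else ent P a (b - 1)) := by
  by_cases h : a < n ∧ b < n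
  · obtain ⟨ha, hb⟩ := h
    rw [ent_in (P * Jmat n l) ha hb, mul_Jmat_apply, ent_in P ha hb]
    simp only [Fin.val_mk]
    congr 1
    split_ifs <;> first | rfl | (exfalso; omega)
  · rw [ent_out _ (by omega), ent_out P (a := a) (b := b) (by omega)]
    split_ifs with h2
    · ring
    · rw [ent_out P (a := a) (b := b - 1) (by omega)]
      ring

lemma conjT_Jmul_ent (Y : Matrix (Fin n) (Fin n) ℂ) (a b : ℕ) :
    ent ((Jmat n l)ᴴ * Y) a b
      = (starRingEnd ℂ) l * ent Y a b + (if a = 0 ∨ n ≤ a then 0 else ent Y (a - 1) b) := by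
  rw [show (Jmat n l)ᴴ * Y = (Yᴴ * Jmat n l)ᴴ by
    rw [Matrix.conjTranspose_mul, Matrix.conjTranspose_conjTranspose]]
  rw [ent_conjT, mulJ_ent, map_add, _root_.map_mul, ent_conjT, Complex.conj_conj,
    apply_ite (starRingEnd ℂ), map_zero, ent_conjT, Complex.conj_conj]

lemma mul_conjT_J_ent (Y : Matrix (Fin n) (Fin n) ℂ) (a b : ℕ) :
    ent (Y * (Jmat n l)ᴴ) a b
      = (starRingEnd ℂ) l * ent Y a b + ent Y a (b + 1) := by
  rw [show Y * (Jmat n l)ᴴ = (Jmat n l * Yᴴ)ᴴ by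
    rw [Matrix.conjTranspose_mul, Matrix.conjTranspose_conjTranspose]]
  rw [ent_conjT, Jmul_ent, map_add, _root_.map_mul, ent_conjT, Complex.conj_conj, ent_conjT,
    Complex.conj_conj]

lemma ent_zero (a b : ℕ) : ent (0 : Matrix (Fin n) (Fin n) ℂ) a b = 0 := by
  unfold ent; split_ifs <;> simp

lemma one_sub_conj_mul_ne (hl : 1 < ‖l‖) : (1 : ℂ) - (starRingEnd ℂ) l * l ≠ 0 := by
  intro h
  have h2 : l * (starRingEnd ℂ) l = 1 := by linear_combination -h
  rw [Complex.mul_conj] at h2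
  have h3 : Complex.normSq l = 1 := by exact_mod_cast h2
  have h4 : ‖l‖ ^ 2 = Complex.normSq l := Complex.sq_norm l
  nlinarith

lemma lemA (hl : 1 < ‖l‖) (X : Matrix (Fin n) (Fin n) ℂ)
    (h : X + Xᴴ * Jmat n l = 0) : X = 0 := by
  have hx : X = -(Xᴴ * Jmat n l) := eq_neg_of_add_eq_zero_left h
  have hxc : Xᴴ = -((Jmat n l)ᴴ * X) := by
    calc Xᴴ = (-(Xᴴ * Jmat n l))ᴴ := by rw [← hx]
    _ = -((Jmat n l)ᴴ * X) := by
        rw [Matrix.conjTranspose_neg, Matrix.conjTranspose_mul,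
          Matrix.conjTranspose_conjTranspose]
  have h1 : X = (Jmat n l)ᴴ * (X * Jmat n l) := by
    calc X = -(Xᴴ * Jmat n l) := hx
    _ = -((-((Jmat n l)ᴴ * X)) * Jmat n l) := by rw [← hxc]
    _ = (Jmat n l)ᴴ * (X * Jmat n l) := by rw [neg_mul, neg_neg, Matrix.mul_assoc]
  have key : ∀ m a b, a + b < m → ent X a b = 0 := by
    intro m
    induction m with
    | zero => intro a b hab; omega
    | succ m ih =>
      intro a b hab
      by_cases hn : a < n ∧ b < n
      · have e : ent X a b = ent ((Jmat n l)ᴴ * (X * Jmat n l)) a b := by rw [← h1]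
        rw [conjT_Jmul_ent] at e
        simp only [mulJ_ent] at e
        have z1 : (if b = 0 ∨ n ≤ b then (0:ℂ) else ent X a (b - 1)) = 0 := by
          split_ifs with hb
          · rfl
          · exact ih a (b - 1) (by omega)
        have z2 : (if b = 0 ∨ n ≤ b then (0:ℂ) else ent X (a - 1) (b - 1)) = 0 := by
          split_ifs with hb
          · rfl
          · exact ih (a - 1) (b - 1) (by omega)
        rw [z1, z2] at e
        have z3 : (if a = 0 ∨ n ≤ a then (0:ℂ) else l * ent X (a - 1) b + 0) = 0 := by
          split_ifs with ha
          · rfl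
          · rw [ih (a - 1) b (by omega)]; ring
        rw [z3] at e
        have hz : (1 - (starRingEnd ℂ) l * l) * ent X a b = 0 := by linear_combination e
        exact (mul_eq_zero.mp hz).resolve_left (one_sub_conj_mul_ne hl)
      · exact ent_out X (by omega)
  refine ent_ext (fun a b => ?_)
  rw [key (a + b + 1) a b (by omega), ent_zero]

lemma lemB (hl : 1 < ‖l‖) (Q : Matrix (Fin n) (Fin n) ℂ)
    (h : Qᴴ + Jmat n l * Q = 0) : Q = 0 := by
  have hq : Qᴴ = -(Jmat n l * Q) := eq_neg_of_add_eq_zero_left h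
  have h1 : Q = Jmat n l * (Q * (Jmat n l)ᴴ) := by
    calc Q = (Qᴴ)ᴴ := by rw [Matrix.conjTranspose_conjTranspose]
    _ = (-(Jmat n l * Q))ᴴ := by rw [← hq]
    _ = -(Qᴴ * (Jmat n l)ᴴ) := by rw [Matrix.conjTranspose_neg, Matrix.conjTranspose_mul]
    _ = -((-(Jmat n l * Q)) * (Jmat n l)ᴴ) := by rw [← hq]
    _ = Jmat n l * (Q * (Jmat n l)ᴴ) := by rw [neg_mul, neg_neg, Matrix.mul_assoc]
  have key : ∀ m a b, 2 * n ≤ m + a + b → ent Q a b = 0 := by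
    intro m
    induction m with
    | zero => intro a b hab; exact ent_out Q (by omega)
    | succ m ih =>
      intro a b hab
      by_cases hn : a < n ∧ b < n
      · have e : ent Q a b = ent (Jmat n l * (Q * (Jmat n l)ᴴ)) a b := by rw [← h1]
        rw [Jmul_ent] at e
        simp only [mul_conjT_J_ent] at e
        rw [ih a (b + 1) (by omega), ih (a + 1) b (by omega), ih (a + 1) (b + 1) (by omega)] at e
        have hz : (1 - (starRingEnd ℂ) l * l) * ent Q a b = 0 := by linear_combination e
        exact (mul_eq_zero.mp hz).resolve_left (one_sub_conj_mul_ne hl)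
      · exact ent_out Q (by omega)
  refine ent_ext (fun a b => ?_)
  rw [key (2 * n) a b (by omega), ent_zero]

noncomputable def fR (n : ℕ) (l : ℂ) :
    Matrix (Fin n) (Fin n) ℂ →ₗ[ℝ] Matrix (Fin n) (Fin n) ℂ where
  toFun X := X + Xᴴ * Jmat n l
  map_add' X Y := by
    show (X + Y) + (X + Y)ᴴ * Jmat n l = (X + Xᴴ * Jmat n l) + (Y + Yᴴ * Jmat n l)
    rw [Matrix.conjTranspose_add, Matrix.add_mul]; abel
  map_smul' r X := by
    show (r • X) + (r • X)ᴴ * Jmat n l = r • (X + Xᴴ * Jmat n l)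
    rw [Matrix.conjTranspose_smul, Matrix.smul_mul, star_trivial, smul_add]

noncomputable def fQ (n : ℕ) (l : ℂ) :
    Matrix (Fin n) (Fin n) ℂ →ₗ[ℝ] Matrix (Fin n) (Fin n) ℂ where
  toFun X := Xᴴ + Jmat n l * X
  map_add' X Y := by
    show (X + Y)ᴴ + Jmat n l * (X + Y) = (Xᴴ + Jmat n l * X) + (Yᴴ + Jmat n l * Y)
    rw [Matrix.conjTranspose_add, Matrix.mul_add]; abel
  map_smul' r X := by
    show (r • X)ᴴ + Jmat n l * (r • X) = r • (Xᴴ + Jmat n l * X)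
    rw [Matrix.conjTranspose_smul, Matrix.mul_smul, star_trivial, smul_add]

lemma surjR (hl : 1 < ‖l‖) (Y : Matrix (Fin n) (Fin n) ℂ) :
    ∃ X : Matrix (Fin n) (Fin n) ℂ, X + Xᴴ * Jmat n l = Y := by
  have hinj : Function.Injective (fR n l) := by
    rw [injective_iff_map_eq_zero]
    intro X hX
    exact lemA hl X hX
  exact LinearMap.injective_iff_surjective.mp hinj Y

lemma surjQ (hl : 1 < ‖l‖) (Y : Matrix (Fin n) (Fin n) ℂ) :
    ∃ X : Matrix (Fin n) (Fin n) ℂ, Xᴴ + Jmat n l * X = Y := by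
  have hinj : Function.Injective (fQ n l) := by
    rw [injective_iff_map_eq_zero]
    intro X hX
    exact lemB hl X hX
  exact LinearMap.injective_iff_surjective.mp hinj Y

lemma exP (B : Matrix (Fin n) (Fin n) ℂ) :
    ∃ P : Matrix (Fin n) (Fin n) ℂ, ∀ (i j : Fin n), 0 < (j : ℕ) →
      (Jmat n l * P - P * Jmat n l) i j = B i j := by
  set P : Matrix (Fin n) (Fin n) ℂ :=
    Matrix.of (fun i j => -∑ t ∈ Finset.range n, ent B ((i : ℕ) + t) ((j : ℕ) + 1 + t)) with hP
  have hPent : ∀ a b : ℕ,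
      ent P a b = -∑ t ∈ Finset.range n, ent B (a + t) (b + 1 + t) := by
    intro a b
    by_cases h : a < n ∧ b < n
    · rw [ent_in P h.1 h.2]; rfl
    · rw [ent_out P (by omega)]
      symm
      rw [neg_eq_zero]
      apply Finset.sum_eq_zero
      intro t _
      exact ent_out B (by omega)
  refine ⟨P, fun i j hj => ?_⟩
  have e1 : ent (Jmat n l * P - P * Jmat n l) (i : ℕ) (j : ℕ) = ent B i j := by
    rw [ent_sub, Jmul_ent, mulJ_ent,
      if_neg (by omega : ¬((j : ℕ) = 0 ∨ n ≤ (j : ℕ)))]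
    simp only [hPent]
    rw [show (j : ℕ) - 1 + 1 = (j : ℕ) by omega]
    have hshift : ∀ t : ℕ, ent B ((i : ℕ) + (t + 1)) ((j : ℕ) + (t + 1))
        = ent B ((i : ℕ) + 1 + t) ((j : ℕ) + 1 + t) := by
      intro t
      rw [show (i : ℕ) + (t + 1) = (i : ℕ) + 1 + t by omega,
        show (j : ℕ) + (t + 1) = (j : ℕ) + 1 + t by omega]
    have h0 := Finset.sum_range_succ' (fun t => ent B ((i : ℕ) + t) ((j : ℕ) + t)) n
    rw [Finset.sum_range_succ (fun t => ent B ((i : ℕ) + t) ((j : ℕ) + t)) n] at h0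
    simp only [hshift] at h0
    rw [ent_out B (a := (i : ℕ) + n) (b := (j : ℕ) + n) (by omega)] at h0
    simp only [Nat.add_zero] at h0
    linear_combination h0
  rw [← ent_apply (Jmat n l * P - P * Jmat n l) i j, ← ent_apply B i j]
  exact e1

lemma commker (P D : Matrix (Fin n) (Fin n) ℂ)
    (hD : ∀ (i j : Fin n), 0 < (j : ℕ) → D i j = 0)
    (hc : Jmat n l * P - P * Jmat n l = D) : D = 0 := by
  have hDent : ∀ a b : ℕ, 0 < b → ent D a b = 0 := by
    intro a b hb
    by_cases h : a < n ∧ b < n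
    · rw [ent_in D h.1 h.2]
      exact hD _ _ hb
    · exact ent_out D (by omega)
  have rel : ∀ a b : ℕ, ent P (a + 1) b - (if b = 0 ∨ n ≤ b then 0 else ent P a (b - 1))
      = ent D a b := by
    intro a b
    have := congrArg (fun M => ent M a b) hc
    rw [ent_sub, Jmul_ent, mulJ_ent] at this
    linear_combination this
  have claim : ∀ m a b : ℕ, n ≤ a + m → b < a → ent P a b = 0 := by
    intro m
    induction m with
    | zero => intro a b ha _; exact ent_out P (by omega)
    | succ m ih =>
      intro a b ha hb
      by_cases hn : a < n
      · have := rel a (b + 1)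
        rw [hDent a (b + 1) (by omega), if_neg (by omega)] at this
        simp only [Nat.add_sub_cancel] at this
        have h2 : ent P a b = ent P (a + 1) (b + 1) := by linear_combination -this
        rw [h2]
        exact ih (a + 1) (b + 1) (by omega) (by omega)
      · exact ent_out P (by omega)
  refine ent_ext (fun a b => ?_)
  rw [ent_zero]
  rcases Nat.eq_zero_or_pos b with hb | hb
  · subst hb
    have := rel a 0
    rw [if_pos (Or.inl rfl), claim n (a + 1) 0 (by omega) (by omega)] at this
    linear_combination -this
  · exact hDent a b hb

end entlemmas

section main
variable {n : ℕ} {l : ℂ}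

lemma key_blocks (C : Matrix (Fin n ⊕ Fin n) (Fin n ⊕ Fin n) ℂ) :
    Cᴴ * Hmat n l + Hmat n l * C
      = Matrix.fromBlocks ((C.toBlocks₂₁)ᴴ * Jmat n l + C.toBlocks₂₁)
          ((C.toBlocks₁₁)ᴴ + C.toBlocks₂₂)
          ((C.toBlocks₂₂)ᴴ * Jmat n l + Jmat n l * C.toBlocks₁₁)
          ((C.toBlocks₁₂)ᴴ + Jmat n l * C.toBlocks₁₂) := by
  set P1 := C.toBlocks₁₁
  set Q1 := C.toBlocks₁₂
  set R1 := C.toBlocks₂₁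
  set S1 := C.toBlocks₂₂
  have hC : Matrix.fromBlocks P1 Q1 R1 S1 = C := Matrix.fromBlocks_toBlocks C
  rw [← hC, Hmat, Matrix.fromBlocks_conjTranspose, Matrix.fromBlocks_multiply,
    Matrix.fromBlocks_multiply, Matrix.fromBlocks_add]
  simp only [Matrix.mul_zero, Matrix.zero_mul, Matrix.mul_one, Matrix.one_mul,
    add_zero, zero_add]

theorem stmt6' (hl : 1 < ‖l‖)
    (A : Matrix (Fin n ⊕ Fin n) (Fin n ⊕ Fin n) ℂ) :
    ∃! D : Matrix (Fin n ⊕ Fin n) (Fin n ⊕ Fin n) ℂ,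
      (∀ p q, D p q ≠ 0 →
        (∃ i : Fin n, p = Sum.inr i) ∧ ∃ j : Fin n, q = Sum.inl j ∧ (j : ℕ) = 0) ∧
      A - D ∈ Tset (Hmat n l) := by
  classical
  obtain ⟨R, hR⟩ := surjR (n := n) hl A.toBlocks₁₁
  obtain ⟨Q, hQ⟩ := surjQ (n := n) hl A.toBlocks₂₂
  set B : Matrix (Fin n) (Fin n) ℂ := A.toBlocks₂₁ - (A.toBlocks₁₂)ᴴ * Jmat n l with hB
  obtain ⟨P, hP⟩ := exP (l := l) B
  set D0 : Matrix (Fin n) (Fin n) ℂ := B - (Jmat n l * P - P * Jmat n l) with hD0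
  have hD0supp : ∀ (i j : Fin n), 0 < (j : ℕ) → D0 i j = 0 := by
    intro i j hj
    rw [hD0, Matrix.sub_apply, hP i j hj, sub_self]
  set D : Matrix (Fin n ⊕ Fin n) (Fin n ⊕ Fin n) ℂ := Matrix.fromBlocks 0 0 D0 0 with hD
  set S : Matrix (Fin n) (Fin n) ℂ := A.toBlocks₁₂ - Pᴴ with hS
  set C : Matrix (Fin n ⊕ Fin n) (Fin n ⊕ Fin n) ℂ := Matrix.fromBlocks P Q R S with hC
  have Dsupp : ∀ p q, D p q ≠ 0 →
      (∃ i : Fin n, p = Sum.inr i) ∧ ∃ j : Fin n, q = Sum.inl j ∧ (j : ℕ) = 0 := by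
    rintro (i | i) (j | j) hpq
    · exact absurd rfl hpq
    · exact absurd rfl hpq
    · refine ⟨⟨i, rfl⟩, j, rfl, ?_⟩
      by_contra hj
      exact hpq (hD0supp i j (by omega))
    · exact absurd rfl hpq
  have hmem : A - D = Cᴴ * Hmat n l + Hmat n l * C := by
    rw [key_blocks C, hC]
    simp only [Matrix.toBlocks_fromBlocks₁₁, Matrix.toBlocks_fromBlocks₁₂,
      Matrix.toBlocks_fromBlocks₂₁, Matrix.toBlocks_fromBlocks₂₂]
    rw [← Matrix.fromBlocks_toBlocks A, hD, sub_eq_add_neg, Matrix.fromBlocks_neg,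
      Matrix.fromBlocks_add]
    rw [Matrix.fromBlocks_inj]
    refine ⟨?_, ?_, ?_, ?_⟩
    · rw [← hR]; abel
    · rw [hS]; abel
    · rw [hS, Matrix.conjTranspose_sub, Matrix.conjTranspose_conjTranspose,
        Matrix.sub_mul, hD0, hB]
      abel
    · rw [← hQ]; abel
  refine ⟨D, ⟨Dsupp, C, hmem⟩, ?_⟩
  rintro D' ⟨D'supp, C2, hC2⟩
  have hE : D' - D = (C - C2)ᴴ * Hmat n l + Hmat n l * (C - C2) := by
    have : (A - D) - (A - D') = D' - D := by abel
    rw [← this, hmem, hC2, Matrix.conjTranspose_sub, Matrix.sub_mul, Matrix.mul_sub]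
    abel
  rw [key_blocks (C - C2)] at hE
  set P2 := (C - C2).toBlocks₁₁
  set S2 := (C - C2).toBlocks₂₂
  have Esupp : ∀ p q, (D' - D) p q ≠ 0 →
      (∃ i : Fin n, p = Sum.inr i) ∧ ∃ j : Fin n, q = Sum.inl j ∧ (j : ℕ) = 0 := by
    intro p q hpq
    rw [Matrix.sub_apply] at hpq
    rcases eq_or_ne (D' p q) 0 with h1 | h1
    · exact Dsupp p q (by rw [h1] at hpq; simpa using fun h => hpq (by rw [h, sub_zero]) )
    · exact D'supp p q h1
  have h12 : P2ᴴ + S2 = 0 := by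
    ext i j
    have h := congrFun (congrFun hE (Sum.inl i)) (Sum.inr j)
    simp only [Matrix.fromBlocks_apply₁₂] at h
    rw [Matrix.sub_apply] at h
    have hz1 : D' (Sum.inl i) (Sum.inr j) = 0 := by
      by_contra hne
      obtain ⟨⟨i', hi'⟩, _⟩ := D'supp _ _ hne
      exact Sum.inl_ne_inr hi'
    have hz2 : D (Sum.inl i) (Sum.inr j) = 0 := rfl
    rw [hz1, hz2, sub_zero] at h
    rw [Matrix.zero_apply]
    exact h.symm
  have hS2 : S2 = -P2ᴴ := by
    have := eq_neg_of_add_eq_zero_right h12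
    exact this
  have h21 : Jmat n l * P2 - P2 * Jmat n l = (D' - D).toBlocks₂₁ := by
    have : S2ᴴ * Jmat n l + Jmat n l * P2 = (D' - D).toBlocks₂₁ := by
      ext i j
      have h := congrFun (congrFun hE (Sum.inr i)) (Sum.inl j)
      simp only [Matrix.fromBlocks_apply₂₁] at h
      rw [← h]; rfl
    rw [hS2, Matrix.conjTranspose_neg, Matrix.conjTranspose_conjTranspose,
      Matrix.neg_mul] at this
    rw [← this]; abel
  have hGsupp : ∀ (i j : Fin n), 0 < (j : ℕ) → (D' - D).toBlocks₂₁ i j = 0 := by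
    intro i j hj
    by_contra hne
    obtain ⟨_, j', hj', hj0⟩ := Esupp (Sum.inr i) (Sum.inl j) hne
    rw [Sum.inl.injEq] at hj'
    subst hj'
    omega
  have hG : (D' - D).toBlocks₂₁ = 0 := commker P2 _ hGsupp h21
  have hEzero : D' - D = 0 := by
    ext p q
    rw [Matrix.zero_apply]
    by_contra hne
    obtain ⟨⟨i, hi⟩, j, hj, hj0⟩ := Esupp p q hne
    subst hi; subst hj
    have : (D' - D).toBlocks₂₁ i j = 0 := by rw [hG]; rfl
    exact hne this
  have := sub_eq_zero.mp hEzero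
  exact this
end main

/-- For `|λ| > 1`: `ℂ^{2n×2n} = T(H_n(λ)) ⊕_ℝ V`, where `V` consists of matrices
supported on the first column of the lower-left `n×n` block (positions `(i,1)`,
`n+1 ≤ i ≤ 2n`). -/
theorem stmt6 (n : ℕ) (l : ℂ) (hl : 1 < ‖l‖)
    (A : Matrix (Fin n ⊕ Fin n) (Fin n ⊕ Fin n) ℂ) :
    ∃! D : Matrix (Fin n ⊕ Fin n) (Fin n ⊕ Fin n) ℂ,
      (∀ p q, D p q ≠ 0 →
        (∃ i : Fin n, p = Sum.inr i) ∧ ∃ j : Fin n, q = Sum.inl j ∧ (j : ℕ) = 0) ∧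
      A - D ∈ Tset (Hmat n l) :=
  stmt6' hl A
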